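/- Let X be a finite uniform d-dimensional simplicial complex which is (d−1)-connected. Then d+1 is an eigenvalue of the upper Laplacian Δ⁺ if and only if X is disorientable. -/

import Mathlib

open scoped BigOperators Classical
open Filter Topology

noncomputable section

/-- A simplicial complex on a vertex set `V`: a family of finite subsets of `V`
(the cells) closed under taking nonempty subsets. -/
structure SComplex (V : Type*) where
  cells : Set (Finset V)
  down_closed : ∀ ⦃s t : Finset V⦄, s ∈ cells → t ⊆ s → t.Nonempty → t ∈ cells

namespace SComplex

variable {V : Type*} (X : SComplex V)

/-- The tuple `σ` of `n` vertices spans an `(n-1)`-dimensional cell of `X`. -/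
def IsCellT {n : ℕ} (σ : Fin n → V) : Prop :=
  Function.Injective σ ∧ Finset.image σ Finset.univ ∈ X.cells

/-- The degree of a cell `s`: the number of cells with one more vertex containing it. -/
def degS (s : Finset V) : ℕ :=
  Set.ncard {t : Finset V | t ∈ X.cells ∧ t.card = s.card + 1 ∧ s ⊆ t}

/-- Degree of the cell spanned by a tuple. -/
def degT {n : ℕ} (σ : Fin n → V) : ℕ :=
  X.degS (Finset.image σ Finset.univ)

/-- An `(n-1)`-form: an alternating function on oriented `(n-1)`-cells, encoded as a
function on `n`-tuples of vertices which vanishes off the cells of `X` and is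
antisymmetric under permutations. -/
def IsForm (n : ℕ) (f : (Fin n → V) → ℝ) : Prop :=
  (∀ σ, ¬ X.IsCellT σ → f σ = 0) ∧
  ∀ (σ : Fin n → V) (π : Equiv.Perm (Fin n)),
    f (σ ∘ π) = ((Equiv.Perm.sign π : ℤ) : ℝ) * f σ

/-- The Dirac form `𝟙_{σ₀}`: 1 at `σ₀`, -1 at the reversed orientation, 0 elsewhere. -/
def dirac {n : ℕ} (σ₀ : Fin n → V) : (Fin n → V) → ℝ := fun σ =>
  if ∃ π : Equiv.Perm (Fin n), Equiv.Perm.sign π = 1 ∧ σ = σ₀ ∘ π then 1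
  else if ∃ π : Equiv.Perm (Fin n), Equiv.Perm.sign π = -1 ∧ σ = σ₀ ∘ π then -1
  else 0

/-- The boundary operator: `(∂f)(σ) = Σ_{v : vσ ∈ X} f(vσ)`. -/
def bdry {n : ℕ} (f : (Fin (n + 1) → V) → ℝ) : (Fin n → V) → ℝ := fun σ =>
  ∑ᶠ v ∈ {v : V | X.IsCellT (Fin.cons v σ)}, f (Fin.cons v σ)

/-- The weighted sum of `f` over the neighbours of `σ`:
`Σ_{σ' ∼ σ} f(σ')/deg σ' = Σ_{v ◁ σ} Σ_i (-1)^i f(v(σ∖σ_i))/deg(v(σ∖σ_i))`. -/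
def nbrW {n : ℕ} (f : (Fin (n + 1) → V) → ℝ) : (Fin (n + 1) → V) → ℝ := fun σ =>
  ∑ᶠ v ∈ {v : V | X.IsCellT (Fin.cons v σ)},
    ∑ i : Fin (n + 1),
      (-1 : ℝ) ^ (i : ℕ) * f (Fin.cons v (σ ∘ i.succAbove)) /
        (X.degT (Fin.cons v (σ ∘ i.succAbove)) : ℝ)

/-- The unweighted sum of `f` over the neighbours of `σ`: `Σ_{σ' ∼ σ} f(σ')`. -/
def nbrU {n : ℕ} (f : (Fin (n + 1) → V) → ℝ) : (Fin (n + 1) → V) → ℝ := fun σ =>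
  ∑ᶠ v ∈ {v : V | X.IsCellT (Fin.cons v σ)},
    ∑ i : Fin (n + 1), (-1 : ℝ) ^ (i : ℕ) * f (Fin.cons v (σ ∘ i.succAbove))

/-- The upper Laplacian `(Δ⁺f)(σ) = f(σ) - Σ_{σ'∼σ} f(σ')/deg σ'`. -/
def lapUp {n : ℕ} (f : (Fin (n + 1) → V) → ℝ) : (Fin (n + 1) → V) → ℝ := fun σ =>
  f σ - X.nbrW f σ

/-- The transition operator of the `p`-lazy walk:
`(Af)(σ) = p f(σ) + ((1-p)/d) Σ_{σ'∼σ} f(σ')/deg σ'`, where `d = n+1`. -/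
def transOp {n : ℕ} (p : ℝ) (f : (Fin (n + 1) → V) → ℝ) : (Fin (n + 1) → V) → ℝ := fun σ =>
  p * f σ + ((1 - p) / ((n : ℝ) + 1)) * X.nbrW f σ

/-- The normalized expectation process `Ẽ_nn = (d/(p(d-1)+1))^nn • A^nn 𝟙_{σ₀}`. -/
def nexp {n : ℕ} (p : ℝ) (σ₀ : Fin (n + 1) → V) (nn : ℕ) : (Fin (n + 1) → V) → ℝ :=
  (((n : ℝ) + 1) / (p * (n : ℝ) + 1)) ^ nn • (X.transOp p)^[nn] (SComplex.dirac σ₀)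

/-- The weighted inner product `⟨f,g⟩ = Σ_{σ ∈ X^{n-1}} f(σ)g(σ)/deg σ`
(each unoriented cell is represented by `n!` tuples). -/
def innerW [Fintype V] {n : ℕ} (f g : (Fin n → V) → ℝ) : ℝ :=
  (1 / (n.factorial : ℝ)) * ∑ σ : Fin n → V, f σ * g σ / (X.degT σ : ℝ)

/-- The unweighted inner product `⟨f,g⟩ = Σ_{σ ∈ X^{n-1}} f(σ)g(σ)`. -/
def innerU [Fintype V] {n : ℕ} (f g : (Fin n → V) → ℝ) : ℝ :=
  (1 / (n.factorial : ℝ)) * ∑ σ : Fin n → V, f σ * g σ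

/-- The norm induced by the weighted inner product. -/
def normW [Fintype V] {n : ℕ} (f : (Fin n → V) → ℝ) : ℝ :=
  Real.sqrt (X.innerW f f)

/-- `f` is a closed `(d-1)`-form (`f ∈ Z^{d-1} = ker ∂_d^*`), characterized by
orthogonality to the image of `∂_d`. -/
def IsClosedForm [Fintype V] (m : ℕ) (f : (Fin (m + 2) → V) → ℝ) : Prop :=
  X.IsForm (m + 2) f ∧
  ∀ g : (Fin (m + 3) → V) → ℝ, X.IsForm (m + 3) g → X.innerW f (X.bdry g) = 0

/-- `f` is an exact `(d-1)`-form (`f ∈ B^{d-1} = im ∂_{d-1}^*`): `f = ∂_{d-1}^* g` for a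
`(d-2)`-form `g`, characterized by the adjoint identity. -/
def IsExactForm [Fintype V] (m : ℕ) (f : (Fin (m + 2) → V) → ℝ) : Prop :=
  X.IsForm (m + 2) f ∧
  ∃ g : (Fin (m + 1) → V) → ℝ, X.IsForm (m + 1) g ∧
    ∀ h : (Fin (m + 2) → V) → ℝ, X.IsForm (m + 2) h →
      X.innerW f h = innerU g (X.bdry h)

/-- Two tuples span the same oriented cell. -/
def SameOr {n : ℕ} (σ σ' : Fin n → V) : Prop :=
  ∃ π : Equiv.Perm (Fin n), Equiv.Perm.sign π = 1 ∧ σ' = σ ∘ π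

/-- The neighbour relation on oriented `(d-1)`-cells: `σ ∼ σ'` iff there is an oriented
`d`-cell of which both `σ` and the reversal of `σ'` are faces with the induced
orientation; equivalently `σ' = (-1)^i v(σ∖σ_i)` for some `v ◁ σ`. -/
def Nbr {n : ℕ} (σ σ' : Fin (n + 1) → V) : Prop :=
  ∃ (v : V) (i : Fin (n + 1)), X.IsCellT (Fin.cons v σ) ∧
    (if Even (i : ℕ) then SameOr σ' (Fin.cons v (σ ∘ i.succAbove))
     else SameOr σ' (Fin.cons v (σ ∘ i.succAbove) ∘ Equiv.swap 0 1))

/-- `σ` is a face of the oriented cell `τ` with the orientation induced by `τ`. -/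
def IsInducedFace {n : ℕ} (σ : Fin (n + 1) → V) (τ : Fin (n + 2) → V) : Prop :=
  ∃ i : Fin (n + 2), if Even (i : ℕ) then SameOr σ (τ ∘ i.succAbove)
    else SameOr σ (τ ∘ i.succAbove ∘ Equiv.swap 0 1)

/-- The family `𝒯` of `d`-cells (`d = m+2`) admits a disorientation: a choice of
orientation for each cell of `𝒯` such that any two of them sharing a
codimension-one face induce the same orientation on it. -/
def HasDisorientation (m : ℕ) (𝒯 : Set (Finset V)) : Prop :=
  ∃ c : Finset V → (Fin (m + 3) → V),
    (∀ t ∈ 𝒯, Function.Injective (c t) ∧ Finset.image (c t) Finset.univ = t) ∧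
    ∀ t ∈ 𝒯, ∀ t' ∈ 𝒯, t ≠ t' → (t ∩ t').card = m + 2 →
      ∃ σ : Fin (m + 2) → V, Function.Injective σ ∧
        Finset.image σ Finset.univ = t ∩ t' ∧
        IsInducedFace σ (c t) ∧ IsInducedFace σ (c t')

/-- `X` (of dimension `d`) has no simple `d`-loops: no non-backtracking closed chain
of `d`-cells in which consecutive cells share a `(d-1)`-cell. -/
def NoSimpleLoops (d : ℕ) : Prop :=
  ∀ (n : ℕ) (τ : ℕ → Finset V), 2 ≤ n → (∀ i, τ (i + n) = τ i) →
    (∀ i, τ i ∈ X.cells ∧ (τ i).card = d + 1) →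
    (∀ i, (τ i ∩ τ (i + 1)) ∈ X.cells ∧ (τ i ∩ τ (i + 1)).card = d) →
    (∀ i, τ i ≠ τ (i + 2)) → False

end SComplex

open SComplex
open Equiv Equiv.Perm

noncomputable section

namespace StmtAux



lemma cons_succAbove_eq_cycleRange_inv {n : ℕ} (i : Fin (n + 1)) :
    Fin.cons i (Fin.succAbove i) = ⇑(Fin.cycleRange i)⁻¹ := by
  funext x
  refine Fin.cases ?_ (fun j => ?_) x
  · simp [Equiv.Perm.eq_inv_iff_eq, Fin.cycleRange_self]
  · simp [Equiv.Perm.eq_inv_iff_eq, Fin.cycleRange_succAbove]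

lemma succAbove_eq_cycleRange_inv_comp_succ {n : ℕ} (i : Fin (n + 1)) :
    Fin.succAbove i = ⇑(Fin.cycleRange i)⁻¹ ∘ Fin.succ := by
  funext j
  have := congrFun (cons_succAbove_eq_cycleRange_inv i) j.succ
  simpa using this

lemma cons_zero_succ_succAbove {n : ℕ} (k : Fin (n + 1)) :
    (Fin.cons 0 (Fin.succ ∘ Fin.succAbove k) : Fin (n + 1) → Fin (n + 2))
      = Fin.succAbove (k.succ) := by
  funext x
  refine Fin.cases ?_ (fun j => ?_) x
  · simp
  · simp [Fin.succ_succAbove_succ]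

/-- The master sign lemma. -/
lemma master_sign {n : ℕ} (i j : Fin (n + 2)) (k : Fin (n + 1))
    (hjk : i.succAbove k = j) :
    ∃ π : Perm (Fin (n + 1)),
      (sign π : ℤ) = -((-1) ^ ((i : ℕ) + (j : ℕ) + (k : ℕ))) ∧
      (Fin.cons i (Fin.succAbove i ∘ Fin.succAbove k) : Fin (n + 1) → Fin (n + 2))
        = Fin.succAbove j ∘ ⇑π := by
  set ρ : Perm (Fin (n + 2)) :=
    Fin.cycleRange j * (Fin.cycleRange i)⁻¹ * (Fin.cycleRange k.succ)⁻¹ with hρ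
  have hρ0 : ρ 0 = 0 := by
    have h1 : (Fin.cycleRange k.succ)⁻¹ 0 = k.succ := by
      simp [Equiv.Perm.inv_eq_iff_eq, Fin.cycleRange_self]
    have h2 : (Fin.cycleRange i)⁻¹ k.succ = j := by
      rw [Equiv.Perm.inv_eq_iff_eq, ← hjk, Fin.cycleRange_succAbove]
    simp [hρ, Equiv.Perm.mul_apply, h1, h2, Fin.cycleRange_self]
  set π : Perm (Fin (n + 1)) := (Equiv.Perm.decomposeFin ρ).2 with hπ
  have h1 : ρ 0 = (Equiv.Perm.decomposeFin ρ).1 := by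
    conv_lhs => rw [← Equiv.Perm.decomposeFin.symm_apply_apply ρ]
    exact Equiv.Perm.decomposeFin_symm_apply_zero _ _
  have hdec : Equiv.Perm.decomposeFin.symm (0, π) = ρ := by
    rw [hπ, show (0 : Fin (n+2)) = (Equiv.Perm.decomposeFin ρ).1 from hρ0 ▸ h1]
    exact Equiv.Perm.decomposeFin.symm_apply_apply ρ
  have hsucc : ∀ x : Fin (n + 1), ρ x.succ = (π x).succ := by
    intro x
    rw [← hdec, Equiv.Perm.decomposeFin_symm_apply_succ]
    simp
  refine ⟨π, ?_, ?_⟩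
  · have hsρ : (sign ρ : ℤ) = sign π := by
      conv_lhs => rw [← hdec]
      rw [Equiv.Perm.decomposeFin.symm_sign]
      simp
    have h2 : (sign ρ : ℤ) = (-1) ^ ((j : ℕ)) * (-1) ^ ((i : ℕ)) * (-1) ^ ((k : ℕ) + 1) := by
      simp [hρ, Fin.sign_cycleRange, Fin.val_succ]
    rw [← hsρ, h2, pow_succ, pow_add, pow_add]
    ring
  · funext x
    have e1 : (Fin.cons i (Fin.succAbove i ∘ Fin.succAbove k) : Fin (n + 1) → Fin (n + 2)) x
        = (Fin.cycleRange i)⁻¹ (Fin.succAbove k.succ x) := by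
      refine Fin.cases ?_ (fun l => ?_) x
      · simp [← cons_succAbove_eq_cycleRange_inv]
      · simp [← cons_succAbove_eq_cycleRange_inv, Fin.succ_succAbove_succ]
    have e2 : Fin.succAbove k.succ x = (Fin.cycleRange k.succ)⁻¹ x.succ := by
      rw [succAbove_eq_cycleRange_inv_comp_succ]; rfl
    have e3 : (Fin.succAbove j ∘ ⇑π) x = (Fin.cycleRange j)⁻¹ ((π x).succ) := by
      rw [Function.comp_apply, succAbove_eq_cycleRange_inv_comp_succ]; rfl
    rw [e1, e2, e3, ← hsucc]
    simp [hρ, Equiv.Perm.mul_apply]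


def extPerm {n : ℕ} (w : Perm (Fin n)) : Perm (Fin (n + 1)) :=
  Equiv.Perm.decomposeFin.symm (0, w)

@[simp] lemma extPerm_zero {n : ℕ} (w : Perm (Fin n)) : extPerm w 0 = 0 :=
  Equiv.Perm.decomposeFin_symm_apply_zero 0 w

@[simp] lemma extPerm_succ {n : ℕ} (w : Perm (Fin n)) (x : Fin n) :
    extPerm w (x.succ) = (w x).succ := by
  simp [extPerm, Equiv.Perm.decomposeFin_symm_apply_succ]

@[simp] lemma sign_extPerm {n : ℕ} (w : Perm (Fin n)) : sign (extPerm w) = sign w := by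
  simp [extPerm, Equiv.Perm.decomposeFin.symm_sign]

lemma cons_comp_ext {α : Type*} {n : ℕ} (a : α) (u : Fin n → α) (w : Perm (Fin n)) :
    (Fin.cons a (u ∘ ⇑w) : Fin (n + 1) → α) = Fin.cons a u ∘ ⇑(extPerm w) := by
  funext x
  refine Fin.cases ?_ (fun l => ?_) x <;> simp


lemma fix_zero_decompose {n : ℕ} (ρ : Perm (Fin (n + 1))) (h0 : ρ 0 = 0) :
    ∃ w : Perm (Fin n), (∀ x, ρ x.succ = (w x).succ) ∧ sign ρ = sign w := by
  set w : Perm (Fin n) := (Equiv.Perm.decomposeFin ρ).2 with hw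
  have h1 : ρ 0 = (Equiv.Perm.decomposeFin ρ).1 := by
    conv_lhs => rw [← Equiv.Perm.decomposeFin.symm_apply_apply ρ]
    exact Equiv.Perm.decomposeFin_symm_apply_zero _ _
  have hdec : Equiv.Perm.decomposeFin.symm (0, w) = ρ := by
    rw [hw, show (0 : Fin (n + 1)) = (Equiv.Perm.decomposeFin ρ).1 from h0 ▸ h1]
    exact Equiv.Perm.decomposeFin.symm_apply_apply ρ
  refine ⟨w, fun x => ?_, ?_⟩
  · rw [← hdec, Equiv.Perm.decomposeFin_symm_apply_succ]; simp
  · conv_lhs => rw [← hdec]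
    rw [Equiv.Perm.decomposeFin.symm_sign]; simp

lemma perm_succAbove {n : ℕ} (u : Perm (Fin (n + 1))) (p : Fin (n + 1)) :
    ∃ w : Perm (Fin n),
      ⇑u ∘ Fin.succAbove p = Fin.succAbove (u p) ∘ ⇑w ∧
      (sign w : ℤ) = (-1) ^ ((u p : Fin (n + 1)) : ℕ) * sign u * (-1) ^ ((p : ℕ)) := by
  set ρ : Perm (Fin (n + 1)) := Fin.cycleRange (u p) * u * (Fin.cycleRange p)⁻¹ with hρ
  have h0 : ρ 0 = 0 := by
    have h1 : (Fin.cycleRange p)⁻¹ 0 = p := by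
      simp [Equiv.Perm.inv_eq_iff_eq, Fin.cycleRange_self]
    simp [hρ, Equiv.Perm.mul_apply, h1, Fin.cycleRange_self]
  obtain ⟨w, hsucc, hsgn⟩ := fix_zero_decompose ρ h0
  refine ⟨w, ?_, ?_⟩
  · funext x
    have e1 : Fin.succAbove p x = (Fin.cycleRange p)⁻¹ x.succ := by
      rw [succAbove_eq_cycleRange_inv_comp_succ]; rfl
    have e2 : Fin.succAbove (u p) (w x) = (Fin.cycleRange (u p))⁻¹ (w x).succ := by
      rw [succAbove_eq_cycleRange_inv_comp_succ]; rfl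
    simp only [Function.comp_apply, e1, e2, ← hsucc]
    simp [hρ, Equiv.Perm.mul_apply]
  · rw [← hsgn]
    simp [hρ, Fin.sign_cycleRange]
    try ring


lemma neg_pow_aux (a b c : ℕ) (s : ℤ) :
    -(-1 : ℤ) ^ (a + b) * ((-1) ^ b * s * (-1) ^ c) = -(-1 : ℤ) ^ (a + c) * s := by
  have h2 : ((-1 : ℤ)) ^ b * ((-1 : ℤ)) ^ b = 1 := by rw [← mul_pow]; norm_num
  rw [pow_add, pow_add]
  linear_combination (-(-1 : ℤ) ^ a * (-1) ^ c * s) * h2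

/-- CORE: adjoining the vertex `τ i` to the face `τ∘succAbove i∘θ` and deleting
its `k`-th vertex yields the face opposite `j := i.succAbove (θ k)`, with
a computable sign twist. -/
lemma core_lemma {V : Type*} {n : ℕ} (τ : Fin (n + 2) → V) (i : Fin (n + 2))
    (θ : Perm (Fin (n + 1))) (k : Fin (n + 1)) :
    ∃ w : Perm (Fin (n + 1)),
      (Fin.cons (τ i) ((τ ∘ Fin.succAbove i ∘ ⇑θ) ∘ Fin.succAbove k)
          : Fin (n + 1) → V)
        = (τ ∘ Fin.succAbove (i.succAbove (θ k))) ∘ ⇑w ∧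
      (sign w : ℤ)
        = -((-1 : ℤ) ^ ((i : ℕ) + ((i.succAbove (θ k) : Fin (n + 2)) : ℕ) + (k : ℕ)))
            * sign θ := by
  obtain ⟨w₁, hw₁f, hw₁s⟩ := perm_succAbove θ k
  set j : Fin (n + 2) := i.succAbove (θ k) with hj
  obtain ⟨π, hπs, hπf⟩ := master_sign i j (θ k) rfl
  refine ⟨π * extPerm w₁, ?_, ?_⟩
  · calc (Fin.cons (τ i) ((τ ∘ Fin.succAbove i ∘ ⇑θ) ∘ Fin.succAbove k)
          : Fin (n + 1) → V)
        = Fin.cons (τ i) ((τ ∘ Fin.succAbove i) ∘ (⇑θ ∘ Fin.succAbove k)) := rfl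
      _ = Fin.cons (τ i) ((τ ∘ Fin.succAbove i) ∘ (Fin.succAbove (θ k) ∘ ⇑w₁)) := by
            rw [hw₁f]
      _ = Fin.cons (τ i) ((τ ∘ (Fin.succAbove i ∘ Fin.succAbove (θ k))) ∘ ⇑w₁) := rfl
      _ = Fin.cons (τ i) (τ ∘ (Fin.succAbove i ∘ Fin.succAbove (θ k)))
            ∘ ⇑(extPerm w₁) := cons_comp_ext _ _ _
      _ = (τ ∘ Fin.cons i (Fin.succAbove i ∘ Fin.succAbove (θ k)))
            ∘ ⇑(extPerm w₁) := by rw [Fin.comp_cons]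
      _ = (τ ∘ (Fin.succAbove j ∘ ⇑π)) ∘ ⇑(extPerm w₁) := by rw [hπf]
      _ = (τ ∘ Fin.succAbove j) ∘ ⇑(π * extPerm w₁) := by
            funext x; simp [Equiv.Perm.mul_apply]
  · have hmul : ((sign (π * extPerm w₁) : ℤˣ) : ℤ)
        = ((sign π : ℤˣ) : ℤ) * ((sign w₁ : ℤˣ) : ℤ) := by
      rw [map_mul, sign_extPerm]; simp
    rw [hmul, hπs, hw₁s]
    exact neg_pow_aux ((i : ℕ) + (j : ℕ)) (((θ k : Fin (n + 1))) : ℕ) (k : ℕ) _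


/-! ### SameOr machinery -/

variable {V : Type*}

lemma sameOr_refl {n : ℕ} (σ : Fin n → V) : SameOr σ σ :=
  ⟨1, by simp, by funext x; rfl⟩

lemma sameOr_comp {n : ℕ} (σ : Fin n → V) (π : Perm (Fin n)) (h : sign π = 1) :
    SameOr σ (σ ∘ ⇑π) := ⟨π, h, rfl⟩

lemma sameOr_trans {n : ℕ} {a b c : Fin n → V} (h1 : SameOr a b) (h2 : SameOr b c) :
    SameOr a c := by
  obtain ⟨π, hπ, rfl⟩ := h1; obtain ⟨ρ, hρ, rfl⟩ := h2
  exact ⟨π * ρ, by rw [map_mul, hπ, hρ, one_mul], by funext x; rfl⟩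

lemma sameOr_symm {n : ℕ} {a b : Fin n → V} (h : SameOr a b) : SameOr b a := by
  obtain ⟨π, hπ, rfl⟩ := h
  refine ⟨π⁻¹, by simp [hπ], ?_⟩
  funext x; simp

lemma sameOr_image {n : ℕ} {a b : Fin n → V} (h : SameOr a b) :
    Finset.image b Finset.univ = Finset.image a Finset.univ := by
  obtain ⟨π, hπ, rfl⟩ := h
  rw [← Finset.image_image, Finset.image_univ_equiv]

lemma comp_perm_cancel {n : ℕ} {x : Fin n → V} (hx : Function.Injective x)
    {π ρ : Perm (Fin n)} (h : x ∘ ⇑π = x ∘ ⇑ρ) : π = ρ :=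
  Equiv.ext fun i => hx (congrFun h i)

lemma exists_perm_of_image_eq {n : ℕ} {x y : Fin n → V} (hx : Function.Injective x)
    (hy : Function.Injective y)
    (h : Finset.image x Finset.univ = Finset.image y Finset.univ) :
    ∃ π : Perm (Fin n), y = x ∘ ⇑π := by
  have hmem : ∀ i, ∃ j, x j = y i := by
    intro i
    have : y i ∈ Finset.image x Finset.univ := by
      rw [h]; exact Finset.mem_image_of_mem _ (Finset.mem_univ i)
    simpa using this
  choose p hp using hmem
  have hpinj : Function.Injective p := fun i i' hii => hy (by rw [← hp i, ← hp i', hii])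
  have hpbij : Function.Bijective p := Finite.injective_iff_bijective.mp hpinj
  refine ⟨Equiv.ofBijective p hpbij, ?_⟩
  funext i
  exact (hp i).symm

lemma sameOr_comp_iff {n : ℕ} {x : Fin n → V} (hx : Function.Injective x)
    (π : Perm (Fin n)) : SameOr x (x ∘ ⇑π) ↔ sign π = 1 := by
  constructor
  · rintro ⟨ρ, hρ, heq⟩
    rw [comp_perm_cancel hx heq]; exact hρ
  · exact fun h => ⟨π, h, rfl⟩

/-! ### Cell basics -/

lemma image_cons {n : ℕ} (v : V) (σ : Fin n → V) :
    Finset.image (Fin.cons v σ) Finset.univ = insert v (Finset.image σ Finset.univ) := by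
  ext a
  simp only [Finset.mem_image, Finset.mem_univ, true_and, Finset.mem_insert]
  constructor
  · rintro ⟨i, rfl⟩
    refine Fin.cases ?_ (fun l => ?_) i
    · left; rfl
    · right; exact ⟨l, by simp⟩
  · rintro (rfl | ⟨j, rfl⟩)
    · exact ⟨0, rfl⟩
    · exact ⟨j.succ, by simp⟩

lemma image_comp_perm {n : ℕ} (σ : Fin n → V) (π : Perm (Fin n)) :
    Finset.image (σ ∘ ⇑π) Finset.univ = Finset.image σ Finset.univ := by
  rw [← Finset.image_image, Finset.image_univ_equiv]

lemma isCellT_comp_perm {X : SComplex V} {n : ℕ} {σ : Fin n → V} (h : X.IsCellT σ)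
    (π : Perm (Fin n)) : X.IsCellT (σ ∘ ⇑π) :=
  ⟨h.1.comp π.injective, by rw [image_comp_perm]; exact h.2⟩

lemma isCellT_of_sameOr {X : SComplex V} {n : ℕ} {a b : Fin n → V} (h : SameOr a b)
    (ha : X.IsCellT a) : X.IsCellT b := by
  obtain ⟨π, hπ, rfl⟩ := h; exact isCellT_comp_perm ha π

lemma degT_comp_perm (X : SComplex V) {n : ℕ} (σ : Fin n → V) (π : Perm (Fin n)) :
    X.degT (σ ∘ ⇑π) = X.degT σ := by
  unfold SComplex.degT; rw [image_comp_perm]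

lemma cons_comp_succAbove {n : ℕ} (v : V) (σ : Fin (n + 1) → V) (k : Fin (n + 1)) :
    (Fin.cons v (σ ∘ Fin.succAbove k) : Fin (n + 1) → V)
      = Fin.cons v σ ∘ Fin.succAbove k.succ := by
  funext x
  refine Fin.cases ?_ (fun l => ?_) x
  · simp
  · simp [Fin.succ_succAbove_succ]

lemma isCellT_tail {X : SComplex V} {n : ℕ} {v : V} {σ : Fin (n + 1) → V}
    (h : X.IsCellT (Fin.cons v σ)) : X.IsCellT σ := by
  refine ⟨fun a b hab => Fin.succ_injective _ (h.1 (by simpa using hab)), ?_⟩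
  refine X.down_closed h.2 ?_ ⟨σ 0, Finset.mem_image_of_mem _ (Finset.mem_univ 0)⟩
  intro a ha
  simp only [Finset.mem_image, Finset.mem_univ, true_and] at ha ⊢
  obtain ⟨i, rfl⟩ := ha
  exact ⟨i.succ, by simp⟩

lemma isCellT_cons_face {X : SComplex V} {n : ℕ} {v : V} {σ : Fin (n + 1) → V}
    (h : X.IsCellT (Fin.cons v σ)) (k : Fin (n + 1)) :
    X.IsCellT (Fin.cons v (σ ∘ Fin.succAbove k)) := by
  rw [cons_comp_succAbove]
  refine ⟨h.1.comp (Fin.succAbove_right_injective), ?_⟩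
  refine X.down_closed h.2 ?_ ⟨v, ?_⟩
  · intro a ha
    simp only [Finset.mem_image, Finset.mem_univ, true_and] at ha ⊢
    obtain ⟨i, rfl⟩ := ha
    exact ⟨_, rfl⟩
  · refine Finset.mem_image.mpr ⟨0, Finset.mem_univ 0, ?_⟩
    simp

/-! ### Form basics -/

lemma IsForm.apply_sameOr {X : SComplex V} {n : ℕ} {f : (Fin n → V) → ℝ}
    (hf : X.IsForm n f) {a b : Fin n → V} (h : SameOr a b) : f b = f a := by
  obtain ⟨π, hπ, rfl⟩ := h
  rw [hf.2 a π, hπ]; simp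


/-! ### Induced faces -/

def sgnP (m : ℕ) (i : ℕ) : Perm (Fin (m + 2)) :=
  if Even i then 1 else Equiv.swap 0 1

lemma sign_sgnP (m i : ℕ) : (sign (sgnP m i) : ℤ) = (-1) ^ i := by
  unfold sgnP
  rcases Nat.even_or_odd i with h | h
  · simp [h, h.neg_one_pow]
  · rw [if_neg (Nat.not_even_iff_odd.mpr h), Equiv.Perm.sign_swap (by
      exact_mod_cast (Fin.zero_ne_one : (0 : Fin (m + 2)) ≠ 1))]
    simp [h.neg_one_pow]

def indF {V : Type*} (m : ℕ) (τ : Fin (m + 3) → V) (i : Fin (m + 3)) :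
    Fin (m + 2) → V :=
  (τ ∘ Fin.succAbove i) ∘ ⇑(sgnP m (i : ℕ))

lemma isInducedFace_iff {V : Type*} (m : ℕ) (x : Fin (m + 2) → V)
    (τ : Fin (m + 3) → V) :
    IsInducedFace x τ ↔ ∃ i, SameOr x (indF m τ i) := by
  unfold IsInducedFace indF sgnP
  refine exists_congr fun i => ?_
  rcases Nat.even_or_odd (i : ℕ) with h | h
  · rw [if_pos h, if_pos h]
    have he : ((τ ∘ Fin.succAbove i) ∘ ⇑(1 : Perm (Fin (m + 2)))) = τ ∘ Fin.succAbove i := by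
      funext z; rfl
    rw [he]
  · rw [if_neg (Nat.not_even_iff_odd.mpr h), if_neg (Nat.not_even_iff_odd.mpr h)]
    exact Iff.rfl

lemma cons_self_face {V : Type*} {n : ℕ} (τ : Fin (n + 2) → V) (i : Fin (n + 2))
    (θ : Perm (Fin (n + 1))) :
    (Fin.cons (τ i) (τ ∘ Fin.succAbove i ∘ ⇑θ) : Fin (n + 2) → V)
      = τ ∘ ⇑((Fin.cycleRange i)⁻¹ * extPerm θ) := by
  funext x
  refine Fin.cases ?_ (fun l => ?_) x
  · simp [Equiv.Perm.mul_apply, ← cons_succAbove_eq_cycleRange_inv]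
  · simp [Equiv.Perm.mul_apply, ← cons_succAbove_eq_cycleRange_inv]

/-- (C1): the neighbour tuple is an induced face with computable sign. -/
lemma cons_face_indF {V : Type*} (m : ℕ) (τ : Fin (m + 3) → V) (i : Fin (m + 3))
    (θ : Perm (Fin (m + 2))) (k : Fin (m + 2)) :
    ∃ w : Perm (Fin (m + 2)),
      (Fin.cons (τ i) ((τ ∘ Fin.succAbove i ∘ ⇑θ) ∘ Fin.succAbove k)
          : Fin (m + 2) → V)
        = indF m τ (i.succAbove (θ k)) ∘ ⇑w ∧
      (sign w : ℤ) = -(-1 : ℤ) ^ ((i : ℕ) + (k : ℕ)) * sign θ := by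
  obtain ⟨w₀, hw₀f, hw₀s⟩ := core_lemma τ i θ k
  set j : Fin (m + 3) := i.succAbove (θ k) with hj
  refine ⟨(sgnP m (j : ℕ))⁻¹ * w₀, ?_, ?_⟩
  · rw [hw₀f]
    funext x
    simp [indF, Equiv.Perm.mul_apply]
  · have hmul : ((sign ((sgnP m (j : ℕ))⁻¹ * w₀) : ℤˣ) : ℤ)
        = ((sign (sgnP m (j : ℕ)) : ℤˣ) : ℤ) * ((sign w₀ : ℤˣ) : ℤ) := by
      rw [map_mul, map_inv]; simp
    rw [hmul, sign_sgnP, hw₀s]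
    have h2 : ((-1 : ℤ)) ^ ((j : ℕ)) * ((-1 : ℤ)) ^ ((j : ℕ)) = 1 := by
      rw [← mul_pow]; norm_num
    rw [pow_add, pow_add]
    linear_combination (-(-1 : ℤ) ^ ((i : ℕ)) * (-1) ^ ((k : ℕ)) * (sign θ : ℤ)) * h2

/-- (C3): decomposing a cone tuple through an enumeration `τ` of its vertex set. -/
lemma cons_decompose {V : Type*} (m : ℕ) {τ : Fin (m + 3) → V} {v : V}
    {σ : Fin (m + 2) → V} {μ : Perm (Fin (m + 3))}
    (h : (Fin.cons v σ : Fin (m + 3) → V) = τ ∘ ⇑μ) :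
    ∃ (i : Fin (m + 3)) (θ : Perm (Fin (m + 2))),
      v = τ i ∧ σ = (τ ∘ Fin.succAbove i) ∘ ⇑θ ∧
      (sign θ : ℤ) = (-1) ^ ((i : ℕ)) * sign μ := by
  set i : Fin (m + 3) := μ 0 with hi
  have h0 : (Fin.cycleRange i * μ) 0 = 0 := by
    simp [Equiv.Perm.mul_apply, ← hi, Fin.cycleRange_self]
  obtain ⟨θ, hsucc, hsgn⟩ := fix_zero_decompose _ h0
  have hv : v = τ i := by
    have := congrFun h 0
    simpa using this
  refine ⟨i, θ, hv, ?_, ?_⟩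
  · funext x
    have h1 : σ x = τ (μ x.succ) := by
      have := congrFun h x.succ
      simpa using this
    have h2 : μ x.succ = i.succAbove (θ x) := by
      have h3 : (Fin.cycleRange i) (μ x.succ) = (θ x).succ := hsucc x
      have : μ x.succ = (Fin.cycleRange i)⁻¹ (θ x).succ := by
        rw [← h3]; simp
      rw [this, succAbove_eq_cycleRange_inv_comp_succ]; rfl
    rw [h1, h2]; rfl
  · have hmul : ((sign (Fin.cycleRange i * μ) : ℤˣ) : ℤ)
        = ((sign (Fin.cycleRange i) : ℤˣ) : ℤ) * ((sign μ : ℤˣ) : ℤ) := by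
      rw [map_mul]; simp
    rw [← hsgn, hmul, Fin.sign_cycleRange]
    push_cast
    ring

/-- Dichotomy of orientations. -/
lemma sameOr_or_reversal {V : Type*} (m : ℕ) {x y : Fin (m + 2) → V}
    (hx : Function.Injective x) (hy : Function.Injective y)
    (him : Finset.image x Finset.univ = Finset.image y Finset.univ) :
    (SameOr x y ∧ ¬ SameOr x (y ∘ ⇑(Equiv.swap (0 : Fin (m + 2)) 1))) ∨
    (¬ SameOr x y ∧ SameOr x (y ∘ ⇑(Equiv.swap (0 : Fin (m + 2)) 1))) := by
  obtain ⟨π, rfl⟩ := exists_perm_of_image_eq hx hy him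
  have hys : (x ∘ ⇑π) ∘ ⇑(Equiv.swap (0 : Fin (m + 2)) 1)
      = x ∘ ⇑(π * Equiv.swap (0 : Fin (m + 2)) 1) := by
    funext z; simp [Equiv.Perm.mul_apply]
  have hsw : sign (Equiv.swap (0 : Fin (m + 2)) 1) = -1 :=
    Equiv.Perm.sign_swap (by exact_mod_cast (Fin.zero_ne_one : (0 : Fin (m + 2)) ≠ 1))
  rw [hys, sameOr_comp_iff hx, sameOr_comp_iff hx]
  rcases Int.units_eq_one_or (sign π) with h | h
  · left
    refine ⟨h, ?_⟩
    rw [map_mul, h, hsw]; decide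
  · right
    refine ⟨by rw [h]; decide, ?_⟩
    rw [map_mul, h, hsw]; decide


/-! ### The neighbour relation on induced faces -/

lemma nbr_indF {V : Type*} {m : ℕ} {X : SComplex V} {τ : Fin (m + 3) → V}
    (hτ : X.IsCellT τ) {i j : Fin (m + 3)} (hij : j ≠ i) :
    X.Nbr (indF m τ i) (indF m τ j ∘ ⇑(Equiv.swap (0 : Fin (m + 2)) 1)) := by
  obtain ⟨khat, hkhat⟩ := Fin.exists_succAbove_eq hij
  set θ : Perm (Fin (m + 2)) := sgnP m (i : ℕ) with hθ
  set k : Fin (m + 2) := θ⁻¹ khat with hk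
  have hθk : θ k = khat := by rw [hk]; simp
  obtain ⟨w, hwf, hws⟩ := cons_face_indF m τ i θ k
  rw [hθk, hkhat] at hwf
  refine ⟨τ i, k, ?_, ?_⟩
  · have hcons : (Fin.cons (τ i) (indF m τ i) : Fin (m + 3) → V)
        = τ ∘ ⇑((Fin.cycleRange i)⁻¹ * extPerm θ) := cons_self_face τ i θ
    rw [hcons]; exact isCellT_comp_perm hτ _
  · have hν : (Fin.cons (τ i) (indF m τ i ∘ Fin.succAbove k) : Fin (m + 2) → V)
        = indF m τ j ∘ ⇑w := hwf
    have hsθ : (sign θ : ℤ) = (-1) ^ ((i : ℕ)) := by rw [hθ, sign_sgnP]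
    have hcommon : SameOr (indF m τ j ∘ ⇑(Equiv.swap (0 : Fin (m + 2)) 1))
        ((Fin.cons (τ i) (indF m τ i ∘ Fin.succAbove k) : Fin (m + 2) → V)
          ∘ ⇑(sgnP m (k : ℕ))) := by
      refine ⟨(Equiv.swap (0 : Fin (m + 2)) 1)⁻¹ * (w * sgnP m (k : ℕ)), ?_, ?_⟩
      · rw [← Units.val_eq_one]
        push_cast [map_mul, map_inv]
        rw [Equiv.Perm.sign_swap
          (by exact_mod_cast (Fin.zero_ne_one : (0 : Fin (m + 2)) ≠ 1))]
        push_cast [hws, hsθ, sign_sgnP]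
        have h2 : ((-1 : ℤ)) ^ ((i : ℕ)) * ((-1 : ℤ)) ^ ((i : ℕ)) = 1 := by
          rw [← mul_pow]; norm_num
        have h3 : ((-1 : ℤ)) ^ ((k : ℕ)) * ((-1 : ℤ)) ^ ((k : ℕ)) = 1 := by
          rw [← mul_pow]; norm_num
        clear h2 h3
        rcases Nat.even_or_odd (i : ℕ) with hi | hi <;>
          rcases Nat.even_or_odd (k : ℕ) with hkk | hkk <;>
            simp [pow_add, hi.neg_one_pow, hkk.neg_one_pow] <;> norm_num
      · funext x
        have h5 := congrFun hν ((sgnP m (k : ℕ)) x)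
        simp only [Function.comp_apply, Equiv.Perm.mul_apply] at h5 ⊢
        rw [h5]
        congr 1
        exact (Equiv.apply_symm_apply _ _).symm
    rcases Nat.even_or_odd (k : ℕ) with hk2 | hk2
    · rw [if_pos hk2]
      have : (Fin.cons (τ i) (indF m τ i ∘ Fin.succAbove k) : Fin (m + 2) → V)
          ∘ ⇑(sgnP m (k : ℕ))
          = Fin.cons (τ i) (indF m τ i ∘ Fin.succAbove k) := by
        unfold sgnP; rw [if_pos hk2]; funext z; rfl
      rwa [this] at hcommon
    · rw [if_neg (Nat.not_even_iff_odd.mpr hk2)]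
      have : (Fin.cons (τ i) (indF m τ i ∘ Fin.succAbove k) : Fin (m + 2) → V)
          ∘ ⇑(sgnP m (k : ℕ))
          = Fin.cons (τ i) (indF m τ i ∘ Fin.succAbove k)
            ∘ ⇑(Equiv.swap (0 : Fin (m + 2)) 1) := by
        unfold sgnP; rw [if_neg (Nat.not_even_iff_odd.mpr hk2)]
      rwa [this] at hcommon


/-! ### Counting -/

lemma isCellT_face {V : Type*} {n : ℕ} {X : SComplex V} {τ : Fin (n + 2) → V}
    (hτ : X.IsCellT τ) (i : Fin (n + 2)) : X.IsCellT (τ ∘ Fin.succAbove i) := by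
  refine ⟨hτ.1.comp (Fin.succAbove_right_injective), ?_⟩
  refine X.down_closed hτ.2 ?_ ⟨τ (i.succAbove 0), Finset.mem_image.mpr
    ⟨0, Finset.mem_univ 0, rfl⟩⟩
  intro a ha
  simp only [Finset.mem_image, Finset.mem_univ, true_and] at ha ⊢
  obtain ⟨l, rfl⟩ := ha
  exact ⟨_, rfl⟩

lemma isCellT_indF {V : Type*} {m : ℕ} {X : SComplex V} {τ : Fin (m + 3) → V}
    (hτ : X.IsCellT τ) (i : Fin (m + 3)) : X.IsCellT (indF m τ i) :=
  isCellT_comp_perm (isCellT_face hτ i) _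

section Counting
variable {V : Type*} [Fintype V] {X : SComplex V}

def NvF (X : SComplex V) {n : ℕ} (σ : Fin (n + 1) → V) : Finset V :=
  (Set.toFinite {v : V | X.IsCellT (Fin.cons v σ)}).toFinset

lemma mem_NvF {n : ℕ} {σ : Fin (n + 1) → V} {v : V} :
    v ∈ NvF X σ ↔ X.IsCellT (Fin.cons v σ) := by
  simp [NvF]

lemma coe_NvF {n : ℕ} (σ : Fin (n + 1) → V) :
    {v : V | X.IsCellT (Fin.cons v σ)} = ↑(NvF X σ) := by
  ext v; simp [mem_NvF]

lemma finsum_NvF {n : ℕ} (σ : Fin (n + 1) → V) (h : V → ℝ) :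
    ∑ᶠ v ∈ {v : V | X.IsCellT (Fin.cons v σ)}, h v = ∑ v ∈ NvF X σ, h v := by
  rw [coe_NvF, finsum_mem_coe_finset]

lemma range_eq_image {n : ℕ} (σ : Fin n → V) {v : V} :
    v ∈ Set.range σ ↔ v ∈ Finset.image σ Finset.univ := by
  simp [Set.mem_range]

lemma card_NvF {n : ℕ} {σ : Fin (n + 1) → V} (hσ : Function.Injective σ) :
    (NvF X σ).card = X.degT σ := by
  classical
  set s : Finset V := Finset.image σ Finset.univ with hs
  have himg : {t : Finset V | t ∈ X.cells ∧ t.card = s.card + 1 ∧ s ⊆ t}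
      = (fun v => insert v s) '' {v : V | X.IsCellT (Fin.cons v σ)} := by
    ext t
    constructor
    · rintro ⟨htc, htcard, hst⟩
      have hsd : (t \ s).card = 1 := by
        rw [Finset.card_sdiff_of_subset hst, htcard]; omega
      obtain ⟨v, hv⟩ := Finset.card_eq_one.mp hsd
      have hvt : v ∈ t ∧ v ∉ s := by
        have := Finset.mem_sdiff.mp (hv ▸ Finset.mem_singleton_self v)
        exact this
      have hts : t = insert v s := by
        apply Finset.Subset.antisymm
        · intro a hat
          by_cases has : a ∈ s
          · exact Finset.mem_insert_of_mem has
          · have h6 : a ∈ t \ s := Finset.mem_sdiff.mpr ⟨hat, has⟩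
            rw [hv, Finset.mem_singleton] at h6
            simp [h6]
        · intro a ha
          rcases Finset.mem_insert.mp ha with rfl | h
          exacts [hvt.1, hst h]
      refine ⟨v, ⟨?_, ?_⟩, hts.symm⟩
      · rw [Fin.cons_injective_iff]
        exact ⟨fun hmem => hvt.2 ((range_eq_image σ).mp hmem), hσ⟩
      · rw [image_cons, ← hs, ← hts]; exact htc
    · rintro ⟨v, hv, rfl⟩
      have hvns : v ∉ s := by
        intro hmem
        exact (Fin.cons_injective_iff.mp hv.1).1 ((range_eq_image σ).mpr hmem)
      refine ⟨?_, ?_, Finset.subset_insert _ _⟩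
      · have h7 := hv.2
        rwa [image_cons, ← hs] at h7
      · rw [Finset.card_insert_of_notMem hvns]
  have hinj : Set.InjOn (fun v => insert v s) {v : V | X.IsCellT (Fin.cons v σ)} := by
    intro v hv v' hv' heq
    have hvns : v ∉ s := fun hmem =>
      (Fin.cons_injective_iff.mp hv.1).1 ((range_eq_image σ).mpr hmem)
    have hvns' : v' ∉ s := fun hmem =>
      (Fin.cons_injective_iff.mp hv'.1).1 ((range_eq_image σ).mpr hmem)
    have : v ∈ insert v' s := by
      have heq' : insert v s = insert v' s := heq
      rw [← heq']; exact Finset.mem_insert_self v s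
    rcases Finset.mem_insert.mp this with h | h
    · exact h
    · exact absurd h hvns
  unfold SComplex.degT SComplex.degS
  rw [← hs, himg, Set.ncard_image_of_injOn hinj,
    Set.ncard_eq_toFinset_card _ (Set.toFinite _)]
  rfl

lemma NvF_nonempty {m : ℕ} {σ : Fin (m + 2) → V}
    (huni : ∀ s ∈ X.cells, ∃ t ∈ X.cells, t.card = m + 3 ∧ s ⊆ t)
    (hσ : X.IsCellT σ) : ∃ v, v ∈ NvF X σ := by
  classical
  obtain ⟨t, htc, htcard, hst⟩ := huni _ hσ.2
  have hscard : (Finset.image σ Finset.univ).card = m + 2 := by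
    rw [Finset.card_image_of_injective _ hσ.1, Finset.card_univ, Fintype.card_fin]
  have hsd : (t \ Finset.image σ Finset.univ).card = 1 := by
    rw [Finset.card_sdiff_of_subset hst, htcard, hscard]
    omega
  obtain ⟨v, hv⟩ := Finset.card_eq_one.mp hsd
  have hvt := Finset.mem_sdiff.mp (hv ▸ Finset.mem_singleton_self v)
  refine ⟨v, mem_NvF.mpr ⟨?_, ?_⟩⟩
  · rw [Fin.cons_injective_iff]
    exact ⟨fun hmem => hvt.2 ((range_eq_image σ).mp hmem), hσ.1⟩
  · rw [image_cons]
    have : insert v (Finset.image σ Finset.univ) = t := by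
      apply Finset.eq_of_subset_of_card_le
      · intro a ha
        rcases Finset.mem_insert.mp ha with rfl | h
        exacts [hvt.1, hst h]
      · rw [htcard, Finset.card_insert_of_notMem hvt.2, hscard]
    rw [this]; exact htc

lemma degT_pos {m : ℕ} {σ : Fin (m + 2) → V}
    (huni : ∀ s ∈ X.cells, ∃ t ∈ X.cells, t.card = m + 3 ∧ s ⊆ t)
    (hσ : X.IsCellT σ) : 0 < X.degT σ := by
  obtain ⟨v, hv⟩ := NvF_nonempty huni hσ
  rw [← card_NvF hσ.1]
  exact Finset.card_pos.mpr ⟨v, hv⟩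

end Counting


/-! ### Enumerations and face indices -/

lemma exists_enum {V : Type*} {n : ℕ} {t : Finset V} (hcard : t.card = n) :
    ∃ τ : Fin n → V, Function.Injective τ ∧ Finset.image τ Finset.univ = t := by
  classical
  refine ⟨fun i => (t.equivFin.symm (Fin.cast hcard.symm i) : V), ?_, ?_⟩
  · intro a b hab
    have := t.equivFin.symm.injective (Subtype.val_injective hab)
    exact Fin.cast_injective _ this
  · ext a
    simp only [Finset.mem_image, Finset.mem_univ, true_and]
    constructor
    · rintro ⟨i, rfl⟩
      exact (t.equivFin.symm _).2
    · intro ha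
      exact ⟨Fin.cast hcard (t.equivFin ⟨a, ha⟩), by simp⟩

lemma image_indF {V : Type*} (m : ℕ) (τ : Fin (m + 3) → V) (i : Fin (m + 3)) :
    Finset.image (indF m τ i) Finset.univ
      = Finset.image (τ ∘ Fin.succAbove i) Finset.univ := by
  unfold indF
  exact image_comp_perm _ _

lemma mem_image_face {V : Type*} (m : ℕ) {τ : Fin (m + 3) → V}
    (hτ : Function.Injective τ) (i i' : Fin (m + 3)) :
    τ i' ∈ Finset.image (τ ∘ Fin.succAbove i) Finset.univ ↔ i' ≠ i := by
  simp only [Finset.mem_image, Finset.mem_univ, true_and, Function.comp_apply]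
  constructor
  · rintro ⟨l, hl⟩
    have := hτ hl
    rw [← this]
    exact Fin.succAbove_ne i l
  · intro h
    obtain ⟨l, hl⟩ := Fin.exists_succAbove_eq h
    exact ⟨l, by rw [hl]⟩

lemma indF_image_inj {V : Type*} (m : ℕ) {τ : Fin (m + 3) → V}
    (hτ : Function.Injective τ) {i i' : Fin (m + 3)}
    (h : Finset.image (indF m τ i) Finset.univ
        = Finset.image (indF m τ i') Finset.univ) : i = i' := by
  by_contra hne
  have h1 : τ i ∈ Finset.image (τ ∘ Fin.succAbove i') Finset.univ :=
    (mem_image_face m hτ i' i).mpr hne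
  rw [← image_indF, ← h, image_indF] at h1
  exact ((mem_image_face m hτ i i).mp h1) rfl

lemma isInducedFace_of_sameOr {V : Type*} {m : ℕ} {x y : Fin (m + 2) → V}
    {τ : Fin (m + 3) → V} (hx : IsInducedFace x τ) (hxy : SameOr x y) :
    IsInducedFace y τ := by
  rw [isInducedFace_iff] at hx ⊢
  obtain ⟨i, hi⟩ := hx
  exact ⟨i, sameOr_trans (sameOr_symm hxy) hi⟩

lemma isInducedFace_iff_sameOr {V : Type*} {m : ℕ} {τ : Fin (m + 3) → V}
    (hτ : Function.Injective τ) {x : Fin (m + 2) → V} (i₀ : Fin (m + 3))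
    (him : Finset.image x Finset.univ = Finset.image (indF m τ i₀) Finset.univ) :
    IsInducedFace x τ ↔ SameOr x (indF m τ i₀) := by
  rw [isInducedFace_iff]
  constructor
  · rintro ⟨i, hi⟩
    have himi : Finset.image (indF m τ i) Finset.univ
        = Finset.image (indF m τ i₀) Finset.univ := by
      rw [← sameOr_image hi] at him
      exact him
    have hii : i = i₀ := indF_image_inj m hτ himi
    rw [hii] at hi
    exact hi
  · exact fun h => ⟨i₀, h⟩

lemma exists_face_index {V : Type*} (m : ℕ) {τ : Fin (m + 3) → V} {t : Finset V}
    (hτinj : Function.Injective τ) (himτ : Finset.image τ Finset.univ = t)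
    {s : Finset V} (hs : s ⊆ t) (hcard : s.card = m + 2) :
    ∃ i, Finset.image (indF m τ i) Finset.univ = s := by
  classical
  have htcard : t.card = m + 3 := by
    rw [← himτ, Finset.card_image_of_injective _ hτinj, Finset.card_univ,
      Fintype.card_fin]
  have hsd : (t \ s).card = 1 := by
    rw [Finset.card_sdiff_of_subset hs, htcard, hcard]
    omega
  obtain ⟨v0, hv0⟩ := Finset.card_eq_one.mp hsd
  have hv0t := Finset.mem_sdiff.mp (hv0 ▸ Finset.mem_singleton_self v0)
  obtain ⟨i, _, hi⟩ := Finset.mem_image.mp (himτ ▸ hv0t.1)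
  refine ⟨i, ?_⟩
  rw [image_indF]
  have hsub : Finset.image (τ ∘ Fin.succAbove i) Finset.univ ⊆ t.erase v0 := by
    intro a ha
    obtain ⟨l, _, rfl⟩ := Finset.mem_image.mp ha
    refine Finset.mem_erase.mpr ⟨?_, himτ ▸ Finset.mem_image.mpr
      ⟨_, Finset.mem_univ _, rfl⟩⟩
    rw [← hi]
    intro hcontra
    exact Fin.succAbove_ne i l (hτinj hcontra)
  have hecard : (t.erase v0).card = m + 2 := by
    rw [Finset.card_erase_of_mem hv0t.1, htcard]
    omega
  have hse : t.erase v0 = s := by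
    apply Finset.eq_of_subset_of_card_le
    · intro a ha
      obtain ⟨hav, hat⟩ := Finset.mem_erase.mp ha
      by_contra hans
      exact hav (Finset.mem_singleton.mp (hv0 ▸ Finset.mem_sdiff.mpr ⟨hat, hans⟩))
    · rw [hecard, hcard]
  rw [← hse]
  apply Finset.eq_of_subset_of_card_le hsub
  rw [hecard, Finset.card_image_of_injective _ (hτinj.comp Fin.succAbove_right_injective),
    Finset.card_univ, Fintype.card_fin]


/-! ### Equality case in the triangle inequality -/

lemma sum_eq_neg_of_bound {α : Type*} (s : Finset α) (a : α → ℝ) (c : ℝ) (hc : c ≠ 0)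
    (hle : ∀ x ∈ s, |a x| ≤ |c|) (hsum : ∑ x ∈ s, a x = -((s.card : ℝ) * c)) :
    ∀ x ∈ s, a x = -c := by
  rcases lt_or_gt_of_ne hc with hneg | hpos
  · have h0 : ∑ x ∈ s, (a x - (-c)) = 0 := by
      rw [Finset.sum_sub_distrib, hsum, Finset.sum_const]
      simp [nsmul_eq_mul]
    intro x hx
    have h1 := (Finset.sum_eq_zero_iff_of_nonpos (fun y hy => sub_nonpos.mpr
      (le_trans (le_abs_self _)
        (le_of_le_of_eq (hle y hy) (abs_of_neg hneg))))).mp h0 x hx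
    linarith
  · have h0 : ∑ x ∈ s, (a x + c) = 0 := by
      rw [Finset.sum_add_distrib, hsum, Finset.sum_const]
      simp [nsmul_eq_mul]
    intro x hx
    have hnn : ∀ y ∈ s, 0 ≤ a y + c := by
      intro y hy
      have h2 := hle y hy
      rw [abs_of_pos hpos] at h2
      have h3 := neg_abs_le (a y)
      linarith
    have h1 := (Finset.sum_eq_zero_iff_of_nonneg hnn).mp h0 x hx
    linarith

/-! ### The normalized eigenfunction -/

def gq {V : Type*} {n : ℕ} (X : SComplex V) (f : (Fin n → V) → ℝ) :
    (Fin n → V) → ℝ := fun σ => f σ / (X.degT σ : ℝ)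

lemma gq_alt {V : Type*} {n : ℕ} {X : SComplex V} {f : (Fin n → V) → ℝ}
    (hform : X.IsForm n f) (σ : Fin n → V) (π : Perm (Fin n)) :
    gq X f (σ ∘ ⇑π) = ((sign π : ℤ) : ℝ) * gq X f σ := by
  unfold gq
  rw [hform.2 σ π, degT_comp_perm]
  ring

lemma gq_sameOr {V : Type*} {n : ℕ} {X : SComplex V} {f : (Fin n → V) → ℝ}
    (hform : X.IsForm n f) {a b : Fin n → V} (h : SameOr a b) :
    gq X f b = gq X f a := by
  obtain ⟨π, hπ, rfl⟩ := h
  rw [gq_alt hform, hπ]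
  simp

lemma gq_zero {V : Type*} {n : ℕ} {X : SComplex V} {f : (Fin n → V) → ℝ}
    (hform : X.IsForm n f) (σ : Fin n → V) (h : ¬X.IsCellT σ) : gq X f σ = 0 := by
  unfold gq
  rw [hform.1 σ h, zero_div]


lemma gq_swap {V : Type*} {m : ℕ} {X : SComplex V} {f : (Fin (m + 2) → V) → ℝ}
    (hform : X.IsForm (m + 2) f) (σ : Fin (m + 2) → V) :
    gq X f (σ ∘ ⇑(Equiv.swap (0 : Fin (m + 2)) 1)) = -(gq X f σ) := by
  rw [gq_alt hform, Equiv.Perm.sign_swap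
    (by exact_mod_cast (Fin.zero_ne_one : (0 : Fin (m + 2)) ≠ 1))]
  push_cast
  ring

/-! ### The forward direction -/

lemma forward {V : Type*} [Fintype V] (m : ℕ) (X : SComplex V)
    (huni : ∀ s ∈ X.cells, ∃ t ∈ X.cells, t.card = m + 3 ∧ s ⊆ t)
    (htop : ∃ s ∈ X.cells, s.card = m + 3)
    (hconn : ∀ σ σ' : Fin (m + 2) → V, X.IsCellT σ → X.IsCellT σ' →
      Relation.ReflTransGen X.Nbr σ σ')
    (f : (Fin (m + 2) → V) → ℝ) (hform : X.IsForm (m + 2) f) (hfne : f ≠ 0)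
    (heig : X.lapUp f = ((m : ℝ) + 3) • f) :
    HasDisorientation m {t : Finset V | t ∈ X.cells ∧ t.card = m + 3} := by
  classical
  have hV : Nonempty V := by
    obtain ⟨t, htc, htcard⟩ := htop
    obtain ⟨v, hv⟩ := Finset.card_pos.mp (show 0 < t.card by rw [htcard]; omega)
    exact ⟨v⟩
  set g := gq X f with hgdef
  have heq : ∀ σ, X.nbrW f σ = -(((m : ℝ) + 2)) * f σ := by
    intro σ
    have h1 := congrFun heig σ
    simp only [SComplex.lapUp, Pi.smul_apply, smul_eq_mul] at h1
    linarith
  have hfg : ∀ σ, X.IsCellT σ → f σ = (X.degT σ : ℝ) * g σ := by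
    intro σ h
    have hd : ((X.degT σ : ℝ)) ≠ 0 := Nat.cast_ne_zero.mpr (degT_pos huni h).ne'
    rw [hgdef]; unfold gq; field_simp
  have hnbrW : ∀ σ : Fin (m + 2) → V, X.nbrW f σ
      = ∑ v ∈ NvF X σ, ∑ k : Fin (m + 2),
          (-1 : ℝ) ^ ((k : ℕ)) * g (Fin.cons v (σ ∘ Fin.succAbove k)) := by
    intro σ
    unfold SComplex.nbrW
    rw [finsum_NvF]
    refine Finset.sum_congr rfl fun v _ => Finset.sum_congr rfl fun k _ => ?_
    rw [hgdef]; unfold gq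
    rw [mul_div_assoc]
  obtain ⟨t0, ht0c, ht0card⟩ := htop
  obtain ⟨τ0, hτ0inj, hτ0im⟩ := exists_enum ht0card
  have hτ0cell : X.IsCellT τ0 := ⟨hτ0inj, by rw [hτ0im]; exact ht0c⟩
  set S : Finset (Fin (m + 2) → V)
    := (Set.toFinite {σ : Fin (m + 2) → V | X.IsCellT σ}).toFinset with hS
  have hmemS : ∀ σ, σ ∈ S ↔ X.IsCellT σ := by intro σ; rw [hS]; simp
  have hSne : S.Nonempty :=
    ⟨τ0 ∘ Fin.succAbove 0, (hmemS _).mpr (isCellT_face hτ0cell 0)⟩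
  obtain ⟨σs, hσsS, hmax⟩ := Finset.exists_max_image S (fun σ => |g σ|) hSne
  set M := |g σs| with hM
  have hσscell := (hmemS _).mp hσsS
  have hbound : ∀ σ, |g σ| ≤ M := by
    intro σ
    by_cases h : X.IsCellT σ
    · exact hmax σ ((hmemS _).mpr h)
    · rw [hgdef, gq_zero hform σ h, abs_zero, hM]
      exact abs_nonneg _
  have hMpos : 0 < M := by
    obtain ⟨σ1, hσ1⟩ := Function.ne_iff.mp hfne
    have hσ1cell : X.IsCellT σ1 := by
      by_contra h
      exact hσ1 (hform.1 σ1 h)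
    have hne : g σ1 ≠ 0 := by
      rw [hgdef]; unfold gq
      exact div_ne_zero hσ1 (Nat.cast_ne_zero.mpr (degT_pos huni hσ1cell).ne')
    calc (0 : ℝ) < |g σ1| := abs_pos.mpr hne
      _ ≤ M := hbound σ1
  have hstep : ∀ σ, X.IsCellT σ → |g σ| = M → ∀ v ∈ NvF X σ, ∀ k : Fin (m + 2),
      (-1 : ℝ) ^ ((k : ℕ)) * g (Fin.cons v (σ ∘ Fin.succAbove k)) = -(g σ) := by
    intro σ hσ hgM
    have hsum : ∑ p ∈ (NvF X σ) ×ˢ (Finset.univ : Finset (Fin (m + 2))),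
        (-1 : ℝ) ^ ((p.2 : ℕ)) * g (Fin.cons p.1 (σ ∘ Fin.succAbove p.2))
        = -(((((NvF X σ) ×ˢ (Finset.univ : Finset (Fin (m + 2)))).card : ℝ)) * g σ) := by
      rw [Finset.sum_product, ← hnbrW σ, heq σ, hfg σ hσ, Finset.card_product,
        card_NvF hσ.1, Finset.card_univ, Fintype.card_fin]
      push_cast
      ring
    have hgne : g σ ≠ 0 := by
      intro h
      rw [h, abs_zero] at hgM
      exact hMpos.ne hgM
    have hres := sum_eq_neg_of_bound _ _ (g σ) hgne (fun p _ => by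
      rw [show |(-1 : ℝ) ^ ((p.2 : ℕ)) * g (Fin.cons p.1 (σ ∘ Fin.succAbove p.2))|
          = |g (Fin.cons p.1 (σ ∘ Fin.succAbove p.2))| by
        rw [abs_mul, abs_pow, abs_neg, abs_one, one_pow, one_mul]]
      rw [hgM]
      exact hbound _) hsum
    intro v hv k
    exact hres (v, k) (Finset.mem_product.mpr ⟨hv, Finset.mem_univ k⟩)
  have hnbrstep : ∀ σ σ', X.IsCellT σ → |g σ| = M → X.Nbr σ σ' →
      X.IsCellT σ' ∧ g σ' = -(g σ) := by
    rintro σ σ' hσ hgM ⟨v, k, hvcell, hcond⟩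
    have hv : v ∈ NvF X σ := mem_NvF.mpr hvcell
    have hterm := hstep σ hσ hgM v hv k
    have hνcell : X.IsCellT (Fin.cons v (σ ∘ Fin.succAbove k)) :=
      isCellT_cons_face hvcell k
    rcases Nat.even_or_odd ((k : ℕ)) with hk | hk
    · rw [if_pos hk] at hcond
      have h1 : g (Fin.cons v (σ ∘ Fin.succAbove k)) = g σ' := by
        rw [hgdef]; exact gq_sameOr hform hcond
      rw [hk.neg_one_pow, one_mul] at hterm
      exact ⟨isCellT_of_sameOr (sameOr_symm hcond) hνcell, by rw [← h1, hterm]⟩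
    · rw [if_neg (Nat.not_even_iff_odd.mpr hk)] at hcond
      have h1 : g ((Fin.cons v (σ ∘ Fin.succAbove k))
          ∘ ⇑(Equiv.swap (0 : Fin (m + 2)) 1)) = g σ' := by
        rw [hgdef]; exact gq_sameOr hform hcond
      have h2 : g ((Fin.cons v (σ ∘ Fin.succAbove k))
          ∘ ⇑(Equiv.swap (0 : Fin (m + 2)) 1))
          = -(g (Fin.cons v (σ ∘ Fin.succAbove k))) := by
        rw [hgdef]; exact gq_swap hform _
      rw [hk.neg_one_pow] at hterm
      have h3 : g (Fin.cons v (σ ∘ Fin.succAbove k)) = g σ := by linarith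
      refine ⟨isCellT_of_sameOr (sameOr_symm hcond) (isCellT_comp_perm hνcell _), ?_⟩
      rw [← h1, h2, h3]
  have hallM : ∀ σ', X.IsCellT σ' → |g σ'| = M := by
    have key : ∀ σ'', Relation.ReflTransGen X.Nbr σs σ'' →
        X.IsCellT σ'' ∧ |g σ''| = M := by
      intro σ'' hch
      induction hch with
      | refl => exact ⟨hσscell, rfl⟩
      | tail hab hbc ih =>
          obtain ⟨hbcell, hbM⟩ := ih
          obtain ⟨hccell, hgc⟩ := hnbrstep _ _ hbcell hbM hbc
          exact ⟨hccell, by rw [hgc, abs_neg, hbM]⟩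
    intro σ' hσ'
    exact (key σ' (hconn σs σ' hσscell hσ')).2
  have hflip : ∀ σ σ', X.IsCellT σ → X.Nbr σ σ' → g σ' = -(g σ) :=
    fun σ σ' h hn => (hnbrstep σ σ' h (hallM σ h) hn).2
  have hchoice : ∀ t ∈ {t : Finset V | t ∈ X.cells ∧ t.card = m + 3},
      ∃ τ : Fin (m + 3) → V, Function.Injective τ
        ∧ Finset.image τ Finset.univ = t ∧ g (indF m τ 0) = M := by
    rintro t ⟨htc, htcard⟩
    obtain ⟨τ, hτinj, hτim⟩ := exists_enum htcard
    have hτcell : X.IsCellT τ := ⟨hτinj, by rw [hτim]; exact htc⟩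
    have hfacecell : X.IsCellT (indF m τ 0) := isCellT_indF hτcell 0
    have habs : |g (indF m τ 0)| = M := hallM _ hfacecell
    rcases (abs_eq (le_of_lt hMpos)).mp habs with hpos | hneg
    · exact ⟨τ, hτinj, hτim, hpos⟩
    · refine ⟨τ ∘ ⇑(extPerm (Equiv.swap (0 : Fin (m + 2)) 1)),
        hτinj.comp (Equiv.injective _), by rw [image_comp_perm]; exact hτim, ?_⟩
      have hkey : indF m (τ ∘ ⇑(extPerm (Equiv.swap (0 : Fin (m + 2)) 1))) 0
          = indF m τ 0 ∘ ⇑(Equiv.swap (0 : Fin (m + 2)) 1) := by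
        funext x
        show (τ ∘ ⇑(extPerm (Equiv.swap (0 : Fin (m + 2)) 1)))
            ((Fin.succAbove 0) ((sgnP m ((0 : Fin (m + 3)) : ℕ)) x))
          = τ ((Fin.succAbove 0) ((sgnP m ((0 : Fin (m + 3)) : ℕ))
              ((Equiv.swap (0 : Fin (m + 2)) 1) x)))
        have hsgn0 : sgnP m ((0 : Fin (m + 3)) : ℕ) = 1 := by
          unfold sgnP
          rw [if_pos (by simp [Nat.even_iff])]
        rw [hsgn0]
        simp only [Equiv.Perm.coe_one, id_eq, Function.comp_apply, Fin.succAbove_zero]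
        rw [extPerm_succ]
      rw [hkey, hgdef, gq_swap hform]
      rw [hgdef] at hneg
      rw [hneg]
      ring
  set Tset : Set (Finset V) := {t : Finset V | t ∈ X.cells ∧ t.card = m + 3}
    with hTset
  set c : Finset V → (Fin (m + 3) → V) := fun t =>
    if h : t ∈ Tset then (hchoice t h).choose else fun _ => Classical.arbitrary V
    with hc
  have hcprop : ∀ t (h : t ∈ Tset), Function.Injective (c t)
      ∧ Finset.image (c t) Finset.univ = t ∧ g (indF m (c t) 0) = M := by
    intro t h
    rw [hc]
    simp only [dif_pos h]
    exact (hchoice t h).choose_spec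
  have hfaceM : ∀ t (ht : t ∈ Tset), ∀ i, g (indF m (c t) i) = M := by
    intro t ht i
    obtain ⟨hcinj, hcim, hc0⟩ := hcprop t ht
    by_cases hi : i = 0
    · rw [hi]; exact hc0
    · have hτcell : X.IsCellT (c t) := ⟨hcinj, by rw [hcim]; exact ht.1⟩
      have hnbr := nbr_indF hτcell (show i ≠ 0 from hi)
      have h1 := hflip _ _ (isCellT_indF hτcell 0) hnbr
      have h2 : g (indF m (c t) i ∘ ⇑(Equiv.swap (0 : Fin (m + 2)) 1))
          = -(g (indF m (c t) i)) := by
        rw [hgdef]; exact gq_swap hform _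
      rw [h2, hc0] at h1
      linarith
  refine ⟨c, fun t ht => ⟨(hcprop t ht).1, (hcprop t ht).2.1⟩, ?_⟩
  intro t ht t' ht' htne hcard
  obtain ⟨hcinj, hcim, _⟩ := hcprop t ht
  obtain ⟨hcinj', hcim', _⟩ := hcprop t' ht'
  obtain ⟨i, hiim⟩ := exists_face_index m hcinj hcim
    (Finset.inter_subset_left) hcard
  obtain ⟨j, hjim⟩ := exists_face_index m hcinj' hcim'
    (Finset.inter_subset_right) hcard
  have hσinj : Function.Injective (indF m (c t) i) :=
    (hcinj.comp (Fin.succAbove_right_injective)).comp (Equiv.injective _)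
  have hσ'inj : Function.Injective (indF m (c t') j) :=
    (hcinj'.comp (Fin.succAbove_right_injective)).comp (Equiv.injective _)
  have hgσ : g (indF m (c t) i) = M := hfaceM t ht i
  have hgσ' : g (indF m (c t') j) = M := hfaceM t' ht' j
  have himeq : Finset.image (indF m (c t) i) Finset.univ
      = Finset.image (indF m (c t') j) Finset.univ := by rw [hiim, hjim]
  rcases sameOr_or_reversal m hσinj hσ'inj himeq with ⟨hso, _⟩ | ⟨_, hso⟩
  · refine ⟨indF m (c t) i, hσinj, hiim, ?_, ?_⟩
    · exact (isInducedFace_iff m _ (c t)).mpr ⟨i, sameOr_refl _⟩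
    · exact isInducedFace_of_sameOr
        ((isInducedFace_iff m _ (c t')).mpr ⟨j, sameOr_refl _⟩) (sameOr_symm hso)
  · exfalso
    have h1 : g (indF m (c t') j ∘ ⇑(Equiv.swap (0 : Fin (m + 2)) 1))
        = -(g (indF m (c t') j)) := by
      rw [hgdef]; exact gq_swap hform _
    have h2 : g (indF m (c t') j ∘ ⇑(Equiv.swap (0 : Fin (m + 2)) 1))
        = g (indF m (c t) i) := by
      rw [hgdef]; exact gq_sameOr hform hso
    rw [h1, hgσ'] at h2
    rw [hgσ] at h2
    linarith


lemma sameOr_iff_sign {V : Type*} {n : ℕ} {z : Fin n → V} (hz : Function.Injective z)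
    (ρ π : Perm (Fin n)) : SameOr (z ∘ ⇑ρ) (z ∘ ⇑π) ↔ sign ρ = sign π := by
  constructor
  · rintro ⟨α, hα, hcomp⟩
    have h1 : z ∘ ⇑π = z ∘ ⇑(ρ * α) := by
      rw [hcomp]; funext x; simp [Equiv.Perm.mul_apply]
    have h2 : π = ρ * α := comp_perm_cancel hz h1
    rw [h2, map_mul, hα, mul_one]
  · intro h
    refine ⟨ρ⁻¹ * π, by rw [map_mul, map_inv, h]; simp, ?_⟩
    funext x; simp [Equiv.Perm.mul_apply]

lemma sameOr_comp_right_iff {V : Type*} {n : ℕ} {z : Fin n → V}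
    (hz : Function.Injective z) (ρ : Perm (Fin n)) :
    SameOr (z ∘ ⇑ρ) z ↔ sign ρ = 1 := by
  have h1 : z ∘ ⇑(1 : Perm (Fin n)) = z := by funext x; rfl
  have h2 := sameOr_iff_sign hz ρ 1
  rw [h1, map_one] at h2
  exact h2

/-! ### The backward direction -/

lemma backward {V : Type*} [Fintype V] (m : ℕ) (X : SComplex V)
    (huni : ∀ s ∈ X.cells, ∃ t ∈ X.cells, t.card = m + 3 ∧ s ⊆ t)
    (htop : ∃ s ∈ X.cells, s.card = m + 3)
    (hdis : HasDisorientation m {t : Finset V | t ∈ X.cells ∧ t.card = m + 3}) :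
    ∃ f : (Fin (m + 2) → V) → ℝ, X.IsForm (m + 2) f ∧ f ≠ 0 ∧
      X.lapUp f = ((m : ℝ) + 3) • f := by
  classical
  obtain ⟨c, hc1, hc2⟩ := hdis
  set Tset : Set (Finset V) := {t : Finset V | t ∈ X.cells ∧ t.card = m + 3}
    with hTset
  have hV : Nonempty V := by
    obtain ⟨t, htc, htcard⟩ := htop
    obtain ⟨v, _⟩ := Finset.card_pos.mp (show 0 < t.card by rw [htcard]; omega)
    exact ⟨v⟩
  set Tc : Finset V → Finset V := fun s =>
    if h : s ∈ X.cells then (huni s h).choose else ∅ with hTcdef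
  have hTc : ∀ s, s ∈ X.cells → Tc s ∈ Tset ∧ s ⊆ Tc s := by
    intro s h
    rw [hTcdef]
    simp only [dif_pos h]
    obtain ⟨h1, h2, h3⟩ := (huni s h).choose_spec
    exact ⟨⟨h1, h2⟩, h3⟩
  -- consistency of induced-face-ness across top cells
  have hcons : ∀ σ : Fin (m + 2) → V, X.IsCellT σ →
      ∀ t ∈ Tset, Finset.image σ Finset.univ ⊆ t →
      ∀ t' ∈ Tset, Finset.image σ Finset.univ ⊆ t' →
      IsInducedFace σ (c t) → IsInducedFace σ (c t') := by
    intro σ hσ t ht hst t' ht' hst' hf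
    by_cases htt : t = t'
    · rwa [← htt]
    have hscard : (Finset.image σ Finset.univ).card = m + 2 := by
      rw [Finset.card_image_of_injective _ hσ.1, Finset.card_univ, Fintype.card_fin]
    have hsub : Finset.image σ Finset.univ ⊆ t ∩ t' :=
      Finset.subset_inter hst hst'
    have hicard : (t ∩ t').card = m + 2 := by
      have hle : (t ∩ t').card ≤ t.card := Finset.card_le_card Finset.inter_subset_left
      have hge : m + 2 ≤ (t ∩ t').card := hscard ▸ Finset.card_le_card hsub
      rcases eq_or_lt_of_le hge with heq2 | hlt
      · exact heq2.symm
      · exfalso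
        have h3 : t ∩ t' = t := by
          apply Finset.eq_of_subset_of_card_le Finset.inter_subset_left
          rw [ht.2]; omega
        have h4 : t ⊆ t' := by
          rw [← h3]; exact Finset.inter_subset_right
        exact htt (Finset.eq_of_subset_of_card_le h4 (by rw [ht.2, ht'.2]))
    have hseq : Finset.image σ Finset.univ = t ∩ t' := by
      apply Finset.eq_of_subset_of_card_le hsub
      rw [hicard, hscard]
    obtain ⟨σ₀, hσ₀inj, hσ₀im, hσ₀t, hσ₀t'⟩ := hc2 t ht t' ht' htt hicard
    -- σ and σ₀ are both induced faces of (c t) with the same image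
    obtain ⟨i, hi⟩ := (isInducedFace_iff m σ (c t)).mp hf
    have himi : Finset.image σ₀ Finset.univ
        = Finset.image (indF m (c t) i) Finset.univ := by
      rw [hσ₀im, ← hseq]
      exact (sameOr_image hi).symm
    have hsoz : SameOr σ₀ (indF m (c t) i) :=
      (isInducedFace_iff_sameOr (hc1 t ht).1 i himi).mp hσ₀t
    have hso : SameOr σ₀ σ := sameOr_trans hsoz (sameOr_symm hi)
    exact isInducedFace_of_sameOr hσ₀t' hso
  set sgn : (Fin (m + 2) → V) → ℝ := fun σ =>
    if IsInducedFace σ (c (Tc (Finset.image σ Finset.univ))) then 1 else -1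
    with hsgndef
  have hsgn_pm : ∀ σ, sgn σ = 1 ∨ sgn σ = -1 := by
    intro σ
    rw [hsgndef]
    by_cases h : IsInducedFace σ (c (Tc (Finset.image σ Finset.univ)))
    · left; simp [h]
    · right; simp [h]
  have hPos : ∀ σ : Fin (m + 2) → V, X.IsCellT σ → ∀ t ∈ Tset,
      Finset.image σ Finset.univ ⊆ t →
      sgn σ = if IsInducedFace σ (c t) then 1 else -1 := by
    intro σ hσ t ht hst
    obtain ⟨hTmem, hTsub⟩ := hTc _ hσ.2
    have hiff : IsInducedFace σ (c (Tc (Finset.image σ Finset.univ)))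
        ↔ IsInducedFace σ (c t) :=
      ⟨hcons σ hσ _ hTmem hTsub t ht hst, hcons σ hσ t ht hst _ hTmem hTsub⟩
    rw [hsgndef]
    simp only
    by_cases h : IsInducedFace σ (c t)
    · rw [if_pos (hiff.mpr h), if_pos h]
    · rw [if_neg (fun hh => h (hiff.mp hh)), if_neg h]
  have hscard : ∀ σ : Fin (m + 2) → V, Function.Injective σ →
      (Finset.image σ Finset.univ).card = m + 2 := by
    intro σ hinj
    rw [Finset.card_image_of_injective _ hinj, Finset.card_univ, Fintype.card_fin]
  have halt : ∀ σ : Fin (m + 2) → V, X.IsCellT σ → ∀ π : Perm (Fin (m + 2)),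
      sgn (σ ∘ ⇑π) = ((sign π : ℤ) : ℝ) * sgn σ := by
    intro σ hσ π
    obtain ⟨hTmem, hTsub⟩ := hTc _ hσ.2
    obtain ⟨hτinj, hτim⟩ := hc1 _ hTmem
    obtain ⟨i₀, hi₀⟩ := exists_face_index m hτinj hτim hTsub (hscard σ hσ.1)
    have hzinj : Function.Injective
        (indF m (c (Tc (Finset.image σ Finset.univ))) i₀) :=
      (hτinj.comp Fin.succAbove_right_injective).comp (Equiv.injective _)
    obtain ⟨ρ, hρ⟩ := exists_perm_of_image_eq hzinj hσ.1 hi₀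
    have hσπ : σ ∘ ⇑π
        = indF m (c (Tc (Finset.image σ Finset.univ))) i₀ ∘ ⇑(ρ * π) := by
      funext x
      exact congrFun hρ (π x)
    have hF1 : IsInducedFace σ (c (Tc (Finset.image σ Finset.univ)))
        ↔ sign ρ = 1 := by
      rw [isInducedFace_iff_sameOr hτinj i₀ hi₀.symm]
      have h4 := sameOr_comp_right_iff hzinj ρ
      rw [← hρ] at h4
      exact h4
    have hσπcell : X.IsCellT (σ ∘ ⇑π) := isCellT_comp_perm hσ π
    have hF2 : IsInducedFace (σ ∘ ⇑π) (c (Tc (Finset.image σ Finset.univ)))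
        ↔ sign (ρ * π) = 1 := by
      rw [isInducedFace_iff_sameOr hτinj i₀
        (by rw [image_comp_perm]; exact hi₀.symm)]
      have h4 := sameOr_comp_right_iff hzinj (ρ * π)
      rw [show (indF m (c (Tc (Finset.image σ Finset.univ))) i₀) ∘ ⇑(ρ * π)
        = σ ∘ ⇑π from hσπ.symm] at h4
      exact h4
    have hs1 : sgn σ
        = if IsInducedFace σ (c (Tc (Finset.image σ Finset.univ))) then 1 else -1 :=
      hPos σ hσ _ hTmem hTsub
    have hs2 : sgn (σ ∘ ⇑π)
        = if IsInducedFace (σ ∘ ⇑π) (c (Tc (Finset.image σ Finset.univ)))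
            then 1 else -1 :=
      hPos _ hσπcell _ hTmem (by rw [image_comp_perm]; exact hTsub)
    have e1 : (if IsInducedFace (σ ∘ ⇑π) (c (Tc (Finset.image σ Finset.univ)))
        then (1 : ℝ) else -1) = ((sign (ρ * π) : ℤ) : ℝ) := by
      rcases Int.units_eq_one_or (sign (ρ * π)) with h | h
      · rw [if_pos (hF2.mpr h), h]; norm_num
      · rw [if_neg (fun hh => by
            rw [hF2, h] at hh
            exact absurd hh (by decide)), h]
        norm_num
    have e2 : (if IsInducedFace σ (c (Tc (Finset.image σ Finset.univ)))
        then (1 : ℝ) else -1) = ((sign ρ : ℤ) : ℝ) := by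
      rcases Int.units_eq_one_or (sign ρ) with h | h
      · rw [if_pos (hF1.mpr h), h]; norm_num
      · rw [if_neg (fun hh => by
            rw [hF1, h] at hh
            exact absurd hh (by decide)), h]
        norm_num
    rw [hs1, hs2, e1, e2, map_mul]
    push_cast
    ring
  have sign_inv_coe : ∀ u : Perm (Fin (m + 2)), ((sign u⁻¹ : ℤˣ) : ℤ) = ((sign u : ℤˣ) : ℤ) := by
    intro u
    rw [map_inv]
    rcases Int.units_eq_one_or (sign u) with h | h <;> rw [h] <;> rfl
  have hsgnNbr : ∀ (v : V) (σ : Fin (m + 2) → V), X.IsCellT (Fin.cons v σ) →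
      ∀ k : Fin (m + 2),
      (-1 : ℝ) ^ ((k : ℕ)) * sgn (Fin.cons v (σ ∘ Fin.succAbove k)) = -(sgn σ) := by
    intro v σ hv k
    set t1 : Finset V := Finset.image (Fin.cons v σ) Finset.univ with ht1
    have htmem : t1 ∈ Tset := by
      refine ⟨hv.2, ?_⟩
      rw [ht1, Finset.card_image_of_injective _ hv.1, Finset.card_univ,
        Fintype.card_fin]
    obtain ⟨hτinj, hτim⟩ := hc1 _ htmem
    obtain ⟨μ, hμ⟩ := exists_perm_of_image_eq hτinj hv.1 hτim
    obtain ⟨i, θ, hvτ, hσθ, hθs⟩ := cons_decompose m hμ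
    obtain ⟨w, hwf, hws⟩ := cons_face_indF m (c t1) i θ k
    have hν : Fin.cons v (σ ∘ Fin.succAbove k)
        = indF m (c t1) (i.succAbove (θ k)) ∘ ⇑w := by
      rw [hvτ, hσθ]; exact hwf
    have hτcell : X.IsCellT (c t1) := ⟨hτinj, by rw [hτim]; exact hv.2⟩
    have hsgnface : ∀ j : Fin (m + 3), sgn (indF m (c t1) j) = 1 := by
      intro j
      have hf : IsInducedFace (indF m (c t1) j) (c t1) :=
        (isInducedFace_iff m _ _).mpr ⟨j, sameOr_refl _⟩
      have hsub : Finset.image (indF m (c t1) j) Finset.univ ⊆ t1 := by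
        intro a ha
        rw [image_indF] at ha
        obtain ⟨l, _, rfl⟩ := Finset.mem_image.mp ha
        have hmem2 : (c t1) (j.succAbove l) ∈ Finset.image (c t1) Finset.univ :=
          Finset.mem_image.mpr ⟨_, Finset.mem_univ _, rfl⟩
        rwa [hτim] at hmem2
      rw [hPos _ (isCellT_indF hτcell j) _ htmem hsub, if_pos hf]
    have hsgni : ∀ j : Fin (m + 3),
        sgn ((c t1) ∘ Fin.succAbove j) = (-1 : ℝ) ^ ((j : ℕ)) := by
      intro j
      have hcomp : (c t1) ∘ Fin.succAbove j
          = indF m (c t1) j ∘ ⇑((sgnP m ((j : ℕ)))⁻¹) := by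
        funext x
        show (c t1) (Fin.succAbove j x)
          = ((c t1) ∘ Fin.succAbove j)
              ((sgnP m ((j : ℕ))) ((sgnP m ((j : ℕ)))⁻¹ x))
        rw [Equiv.Perm.inv_def, Equiv.apply_symm_apply]
        rfl
      rw [hcomp, halt _ (isCellT_indF hτcell j) _, hsgnface j, mul_one,
        sign_inv_coe, sign_sgnP]
      push_cast
      ring
    have hsgnσ : sgn σ = ((sign θ : ℤ) : ℝ) * (-1 : ℝ) ^ ((i : ℕ)) := by
      conv_lhs => rw [hσθ]
      rw [halt _ (isCellT_face hτcell i) θ, hsgni i]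
    have hsgnν : sgn (Fin.cons v (σ ∘ Fin.succAbove k)) = ((sign w : ℤ) : ℝ) := by
      rw [hν, halt _ (isCellT_indF hτcell _) w, hsgnface, mul_one]
    have hwsr : ((sign w : ℤ) : ℝ)
        = -(-1 : ℝ) ^ ((i : ℕ) + (k : ℕ)) * ((sign θ : ℤ) : ℝ) := by
      exact_mod_cast congrArg (fun z : ℤ => (z : ℝ)) hws
    rw [hsgnν, hsgnσ, hwsr, pow_add]
    rcases Nat.even_or_odd ((k : ℕ)) with hk | hk <;>
      rw [hk.neg_one_pow] <;> ring
  set F : (Fin (m + 2) → V) → ℝ := fun σ =>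
    if h : X.IsCellT σ then (X.degT σ : ℝ) * sgn σ else 0 with hFdef
  have hFcell : ∀ σ, X.IsCellT σ → F σ = (X.degT σ : ℝ) * sgn σ := by
    intro σ h; rw [hFdef]; simp only [dif_pos h]
  have hFnot : ∀ σ, ¬X.IsCellT σ → F σ = 0 := by
    intro σ h; rw [hFdef]; simp only [dif_neg h]
  have hFform : X.IsForm (m + 2) F := by
    refine ⟨hFnot, ?_⟩
    intro σ π
    by_cases h : X.IsCellT σ
    · rw [hFcell _ (isCellT_comp_perm h π), hFcell _ h, degT_comp_perm, halt _ h π]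
      ring
    · have h2 : ¬X.IsCellT (σ ∘ ⇑π) := fun hc => h (by
        have h3 := isCellT_comp_perm hc π⁻¹
        rwa [show (σ ∘ ⇑π) ∘ ⇑π⁻¹ = σ from by funext x; simp] at h3)
      rw [hFnot _ h, hFnot _ h2]
      ring
  refine ⟨F, hFform, ?_, ?_⟩
  · obtain ⟨t0, ht0c, ht0card⟩ := htop
    obtain ⟨τ0, hτ0inj, hτ0im⟩ := exists_enum ht0card
    have hτ0cell : X.IsCellT τ0 := ⟨hτ0inj, by rw [hτ0im]; exact ht0c⟩
    have hcell0 : X.IsCellT (τ0 ∘ Fin.succAbove 0) := isCellT_face hτ0cell 0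
    intro hF0
    have h1 : F (τ0 ∘ Fin.succAbove 0) = 0 := by rw [hF0]; rfl
    rw [hFcell _ hcell0] at h1
    have hdeg : ((X.degT (τ0 ∘ Fin.succAbove 0) : ℝ)) ≠ 0 :=
      Nat.cast_ne_zero.mpr (degT_pos huni hcell0).ne'
    rcases hsgn_pm (τ0 ∘ Fin.succAbove 0) with h2 | h2 <;> rw [h2] at h1
    · exact hdeg (by linarith)
    · exact hdeg (by linarith)
  · funext σ
    have key : X.nbrW F σ = -(((m : ℝ) + 2)) * F σ := by
      by_cases h : X.IsCellT σ
      · have hconst : X.nbrW F σ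
            = ∑ v ∈ NvF X σ, ∑ _k : Fin (m + 2), -(sgn σ) := by
          unfold SComplex.nbrW
          rw [finsum_NvF]
          refine Finset.sum_congr rfl fun v hv => Finset.sum_congr rfl fun k _ => ?_
          have hvcell := mem_NvF.mp hv
          have hνcell : X.IsCellT (Fin.cons v (σ ∘ Fin.succAbove k)) :=
            isCellT_cons_face hvcell k
          rw [hFcell _ hνcell]
          have hdeg : ((X.degT (Fin.cons v (σ ∘ Fin.succAbove k)) : ℝ)) ≠ 0 :=
            Nat.cast_ne_zero.mpr (degT_pos huni hνcell).ne'
          have e : (-1 : ℝ) ^ ((k : ℕ))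
              * ((X.degT (Fin.cons v (σ ∘ Fin.succAbove k)) : ℝ)
                  * sgn (Fin.cons v (σ ∘ Fin.succAbove k)))
                / (X.degT (Fin.cons v (σ ∘ Fin.succAbove k)) : ℝ)
              = (-1 : ℝ) ^ ((k : ℕ)) * sgn (Fin.cons v (σ ∘ Fin.succAbove k)) := by
            field_simp
          rw [e, hsgnNbr v σ hvcell k]
        rw [hconst, hFcell _ h]
        rw [Finset.sum_const, Finset.sum_const, Finset.card_univ, Fintype.card_fin,
          card_NvF h.1, nsmul_eq_mul, nsmul_eq_mul]
        push_cast
        ring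
      · have hempty : {v : V | X.IsCellT (Fin.cons v σ)} = ∅ := by
          ext v
          simp only [Set.mem_empty_iff_false, iff_false, Set.mem_setOf_eq]
          exact fun hv => h (isCellT_tail hv)
        unfold SComplex.nbrW
        rw [hempty, finsum_mem_empty, hFnot _ h]
        ring
    simp only [SComplex.lapUp, Pi.smul_apply, smul_eq_mul]
    rw [key]
    ring

end StmtAux


/-- For a finite uniform `(d-1)`-connected `d`-dimensional complex
(`d = m+2`), `d+1` is an eigenvalue of the upper Laplacian `Δ⁺` iff `X` is
disorientable. -/
theorem stmt5 {V : Type*} [Fintype V] (m : ℕ) (X : SComplex V)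
    (hdim : ∀ s ∈ X.cells, s.card ≤ m + 3)
    (huni : ∀ s ∈ X.cells, ∃ t ∈ X.cells, t.card = m + 3 ∧ s ⊆ t)
    (htop : ∃ s ∈ X.cells, s.card = m + 3)
    (hconn : ∀ σ σ' : Fin (m + 2) → V, X.IsCellT σ → X.IsCellT σ' →
      Relation.ReflTransGen X.Nbr σ σ') :
    (∃ f : (Fin (m + 2) → V) → ℝ, X.IsForm (m + 2) f ∧ f ≠ 0 ∧
        X.lapUp f = ((m : ℝ) + 3) • f) ↔
      HasDisorientation m {t : Finset V | t ∈ X.cells ∧ t.card = m + 3} := by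
  constructor
  · rintro ⟨f, hform, hfne, heig⟩
    exact StmtAux.forward m X huni htop hconn f hform hfne heig
  · intro hdis
    exact StmtAux.backward m X huni htop hdis

end
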